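/- Let x_1,...,x_d ∈ H with positive definite Gram matrix, and let G be a directed acyclic graph on [d] with parent sets Π_j and non-descendant sets N_j. Then the local condition 'P_i (I − P_{Π_j}) P_j = 0 for all j ∈ [d] and all i ∈ N_j' is equivalent to the pairwise condition 'P_i (I − P_{Π_i}) (I − P_{Π_j}) P_j = 0 for all distinct i, j ∈ [d]'. -/

import Mathlib

theorem stmt_18 {H : Type*} [NormedAddCommGroup H] [InnerProductSpace ℝ H] [CompleteSpace H]
    {d : ℕ} (x : Fin d → H)
    (hGram : (Matrix.of fun (i j : Fin d) => (inner ℝ (x i) (x j) : ℝ)).PosDef)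
    (P : Finset (Fin d) → H →L[ℝ] H)
    (hsa : ∀ A, IsSelfAdjoint (P A))
    (hidem : ∀ A, P A * P A = P A)
    (hrange : ∀ A : Finset (Fin d), LinearMap.range (P A : H →ₗ[ℝ] H) = Submodule.span ℝ (x '' ↑A))
    (Par : Fin d → Finset (Fin d))
    (hacyc : ∀ a : Fin d, ¬ Relation.TransGen (fun u v : Fin d => u ∈ Par v) a a) :
    (∀ j i : Fin d, i ≠ j → ¬ Relation.TransGen (fun u v : Fin d => u ∈ Par v) j i →
        P {i} * (1 - P (Par j)) * P {j} = 0) ↔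
      (∀ i j : Fin d, i ≠ j →
        P {i} * (1 - P (Par i)) * (1 - P (Par j)) * P {j} = 0) := by
  classical
  -- basic facts about the projections
  have hsym : ∀ (A : Finset (Fin d)) (u v : H),
      (inner ℝ (P A u) v : ℝ) = inner ℝ u (P A v) := fun A u v => (hsa A).isSymmetric u v
  have hmem : ∀ (A : Finset (Fin d)) (v : H), P A v ∈ Submodule.span ℝ (x '' ↑A) := by
    intro A v
    rw [← hrange A]
    exact ⟨v, rfl⟩
  have hfix : ∀ (A : Finset (Fin d)) (y : H), y ∈ Submodule.span ℝ (x '' ↑A) → P A y = y := by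
    intro A y hy
    rw [← hrange A] at hy
    obtain ⟨z, rfl⟩ := hy
    have h := congrArg (fun T : H →L[ℝ] H => T z) (hidem A)
    simpa using h
  have hfixi : ∀ i : Fin d, P {i} (x i) = x i := by
    intro i
    apply hfix
    apply Submodule.subset_span
    simp
  -- each x i is nonzero
  have hx0 : ∀ i : Fin d, x i ≠ 0 := by
    intro i hxi
    have hv : (Pi.single i 1 : Fin d → ℝ) ≠ 0 := by
      intro h
      have := congrFun h i
      simp at this
    have h := hGram.dotProduct_mulVec_pos hv
    simp [Matrix.mulVec, dotProduct, Pi.single_apply, hxi] at h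
  have hxx : ∀ i : Fin d, (inner ℝ (x i) (x i) : ℝ) ≠ 0 := by
    intro i
    simpa [inner_self_eq_zero] using hx0 i
  -- criterion for the rank-one projection to kill a vector
  have hPzero' : ∀ (i : Fin d) (z : H), P {i} z = 0 → (inner ℝ (x i) z : ℝ) = 0 := by
    intro i z h
    calc (inner ℝ (x i) z : ℝ) = inner ℝ (P {i} (x i)) z := by rw [hfixi]
      _ = inner ℝ (x i) (P {i} z) := hsym {i} (x i) z
      _ = 0 := by rw [h, inner_zero_right]
  have hPzero : ∀ (i : Fin d) (z : H), (inner ℝ (x i) z : ℝ) = 0 → P {i} z = 0 := by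
    intro i z h
    have hm := hmem {i} z
    rw [Finset.coe_singleton, Set.image_singleton, Submodule.mem_span_singleton] at hm
    obtain ⟨c, hc⟩ := hm
    have h2 : (inner ℝ (x i) (P {i} z) : ℝ) = 0 := by
      rw [← hsym {i} (x i) z, hfixi, h]
    rw [← hc] at h2 ⊢
    rw [real_inner_smul_right] at h2
    rcases mul_eq_zero.1 h2 with h3 | h3
    · rw [h3, zero_smul]
    · exact absurd h3 (hxx i)
  -- orthogonality to spans
  have hspan : ∀ (w : H) (A : Finset (Fin d)), (∀ k ∈ A, (inner ℝ w (x k) : ℝ) = 0) →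
      ∀ y ∈ Submodule.span ℝ (x '' ↑A), (inner ℝ w y : ℝ) = 0 := by
    intro w A hA y hy
    induction hy using Submodule.span_induction with
    | mem z hz =>
      obtain ⟨k, hk, rfl⟩ := hz
      exact hA k hk
    | zero => simp
    | add u v _ _ hu hv => rw [inner_add_right, hu, hv, add_zero]
    | smul c u _ hu => rw [real_inner_smul_right, hu, mul_zero]
  -- moving (1 - P (Par i)) across the inner ℝ product
  have hswap : ∀ (i : Fin d) (z : H),
      (inner ℝ (x i) (z - P (Par i) z) : ℝ) = inner ℝ (x i - P (Par i) (x i)) z := by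
    intro i z
    rw [inner_sub_right, ← hsym (Par i) (x i) z, ← inner_sub_left]
  -- reformulation of the local condition
  have key1 : ∀ i j : Fin d,
      (P {i} * (1 - P (Par j)) * P {j} = 0) ↔
        (inner ℝ (x i) (x j - P (Par j) (x j)) : ℝ) = 0 := by
    intro i j
    constructor
    · intro h
      have h2 := congrArg (fun T : H →L[ℝ] H => T (x j)) h
      simp only [ContinuousLinearMap.mul_apply, ContinuousLinearMap.zero_apply,
        ContinuousLinearMap.sub_apply, ContinuousLinearMap.one_apply, hfixi j] at h2
      exact hPzero' i _ h2
    · intro h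
      ext v
      simp only [ContinuousLinearMap.mul_apply, ContinuousLinearMap.zero_apply,
        ContinuousLinearMap.sub_apply, ContinuousLinearMap.one_apply]
      have hm := hmem {j} v
      rw [Finset.coe_singleton, Set.image_singleton, Submodule.mem_span_singleton] at hm
      obtain ⟨c, hc⟩ := hm
      rw [← hc]
      have he : c • x j - P (Par j) (c • x j) = c • (x j - P (Par j) (x j)) := by
        rw [map_smul, smul_sub]
      rw [he, map_smul, hPzero i _ h, smul_zero]
  -- reformulation of the pairwise condition
  have key2 : ∀ i j : Fin d,
      (P {i} * (1 - P (Par i)) * (1 - P (Par j)) * P {j} = 0) ↔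
        (inner ℝ (x i - P (Par i) (x i)) (x j - P (Par j) (x j)) : ℝ) = 0 := by
    intro i j
    constructor
    · intro h
      have h2 := congrArg (fun T : H →L[ℝ] H => T (x j)) h
      simp only [ContinuousLinearMap.mul_apply, ContinuousLinearMap.zero_apply,
        ContinuousLinearMap.sub_apply, ContinuousLinearMap.one_apply, hfixi j] at h2
      have h3 := hPzero' i _ h2
      rw [hswap] at h3
      exact h3
    · intro h
      ext v
      simp only [ContinuousLinearMap.mul_apply, ContinuousLinearMap.zero_apply,
        ContinuousLinearMap.sub_apply, ContinuousLinearMap.one_apply]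
      have hm := hmem {j} v
      rw [Finset.coe_singleton, Set.image_singleton, Submodule.mem_span_singleton] at hm
      obtain ⟨c, hc⟩ := hm
      rw [← hc]
      have he : c • x j - P (Par j) (c • x j) = c • (x j - P (Par j) (x j)) := by
        rw [map_smul, smul_sub]
      rw [he]
      have he2 : c • (x j - P (Par j) (x j)) - P (Par i) (c • (x j - P (Par j) (x j)))
          = c • ((x j - P (Par j) (x j)) - P (Par i) (x j - P (Par j) (x j))) := by
        rw [map_smul]
        exact (smul_sub _ _ _).symm
      rw [he2, map_smul]
      have h4 : (inner ℝ (x i) ((x j - P (Par j) (x j)) -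
          P (Par i) (x j - P (Par j) (x j))) : ℝ) = 0 := by
        rw [hswap]
        exact h
      rw [hPzero i _ h4, smul_zero]
  constructor
  · -- local ⇒ pairwise
    intro hL i j hij
    rw [key2 i j]
    have claim : ∀ a b : Fin d, a ≠ b →
        ¬ Relation.TransGen (fun u v : Fin d => u ∈ Par v) b a →
        (inner ℝ (x b - P (Par b) (x b)) (x a - P (Par a) (x a)) : ℝ) = 0 := by
      intro a b hab hba
      have h1 : (inner ℝ (x b - P (Par b) (x b)) (x a) : ℝ) = 0 := by
        rw [real_inner_comm]
        exact (key1 a b).1 (hL b a hab hba)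
      have h2 : ∀ m ∈ Par a, (inner ℝ (x b - P (Par b) (x b)) (x m) : ℝ) = 0 := by
        intro m hm
        have hmb : m ≠ b := by
          rintro rfl
          exact hba (Relation.TransGen.single hm)
        have hnt : ¬ Relation.TransGen (fun u v : Fin d => u ∈ Par v) b m := by
          intro h
          exact hba (h.tail hm)
        rw [real_inner_comm]
        exact (key1 m b).1 (hL b m hmb hnt)
      have h3 : (inner ℝ (x b - P (Par b) (x b)) (P (Par a) (x a)) : ℝ) = 0 :=
        hspan _ (Par a) h2 _ (hmem (Par a) (x a))
      rw [inner_sub_right, h1, h3, sub_zero]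
    by_cases hji : Relation.TransGen (fun u v : Fin d => u ∈ Par v) j i
    · have hij' : ¬ Relation.TransGen (fun u v : Fin d => u ∈ Par v) i j := by
        intro h
        exact hacyc j (hji.trans h)
      exact claim j i hij.symm hij'
    · rw [real_inner_comm]
      exact claim i j hij hji
  · -- pairwise ⇒ local
    intro hP j i hij hji
    haveI hi1 : IsTrans (Fin d) (Relation.TransGen (fun u v : Fin d => u ∈ Par v)) :=
      ⟨fun _ _ _ h1 h2 => h1.trans h2⟩
    haveI hi2 : IsIrrefl (Fin d) (Relation.TransGen (fun u v : Fin d => u ∈ Par v)) :=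
      ⟨hacyc⟩
    have wf : WellFounded (Relation.TransGen (fun u v : Fin d => u ∈ Par v)) :=
      Finite.wellFounded_of_trans_of_irrefl _
    have main : ∀ k : Fin d, k ≠ j →
        ¬ Relation.TransGen (fun u v : Fin d => u ∈ Par v) j k →
        (inner ℝ (x j - P (Par j) (x j)) (x k) : ℝ) = 0 := by
      intro k
      refine wf.induction (C := fun k => k ≠ j →
        ¬ Relation.TransGen (fun u v : Fin d => u ∈ Par v) j k →
        (inner ℝ (x j - P (Par j) (x j)) (x k) : ℝ) = 0) k ?_
      intro k IH hkj hjk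
      have hA : (inner ℝ (x j - P (Par j) (x j)) (x k - P (Par k) (x k)) : ℝ) = 0 :=
        (key2 j k).1 (hP j k (Ne.symm hkj))
      have hB : (inner ℝ (x j - P (Par j) (x j)) (P (Par k) (x k)) : ℝ) = 0 := by
        refine hspan _ (Par k) ?_ _ (hmem (Par k) (x k))
        intro m hm
        have hmk : Relation.TransGen (fun u v : Fin d => u ∈ Par v) m k :=
          Relation.TransGen.single hm
        have hmj : m ≠ j := by
          rintro rfl
          exact hjk hmk
        have hnt : ¬ Relation.TransGen (fun u v : Fin d => u ∈ Par v) j m := by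
          intro h
          exact hjk (h.tail hm)
        exact IH m hmk hmj hnt
      have hxk : x k = (x k - P (Par k) (x k)) + P (Par k) (x k) := by
        rw [sub_add_cancel]
      rw [hxk, inner_add_right, hA, hB, add_zero]
    rw [key1 i j, real_inner_comm]
    exact main i hij hji
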